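/- Let π ∈ S_{2n−1} have constant difference sequence with difference value d, where gcd(2n−1, d) = 1, and let e ∈ {1,…,2n−2} be the multiplicative inverse of d modulo 2n−1. Then, counting pointers cyclically (pointers are the pairs (p, p+1) with p ∈ Z_{2n−1}, each entry having left pointer (π(i)−1, π(i)) and right pointer (π(i), π(i)+1) modulo 2n−1), the number of valid pointer contexts of π is (2n−1)·min(e − 1, 2n−1−e). -/

import Mathlib

/-- The representative of `x : ZMod n` in `{1, …, n}` (so `0` represents `n`). -/
def repr1 (n : ℕ) (x : ZMod n) : ℕ := if x = 0 then n else x.val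

/-- Values of `ZMod n`, embedded into `ZMod (n+1)` via representatives in `{1, …, n}`. -/
def emb (n : ℕ) (x : ZMod n) : ZMod (n + 1) := (repr1 n x : ZMod (n + 1))

/-- `L 0 = 0` and `L i = π(i)` for `i ∈ {1,…,n}`: the listing used to build
the cycle `Y_π = (π(n) π(n−1) … π(1) 0)`. -/
def listFun (n : ℕ) (π : Equiv.Perm (ZMod n)) : ZMod (n + 1) → ZMod (n + 1) :=
  fun i => if i = 0 then 0 else emb n (π (i.val : ZMod n))

/-- The inverse listing of `listFun`. -/
def listInv (n : ℕ) (π : Equiv.Perm (ZMod n)) : ZMod (n + 1) → ZMod (n + 1) :=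
  fun y => if y = 0 then 0 else emb n (π.symm (y.val : ZMod n))

/-- The cycle `Y_π = (π(n) π(n−1) … π(1) 0)` on `{0,1,…,n}`, as a function:
it sends `L(i)` to `L(i-1)`. -/
def Yfun (n : ℕ) (π : Equiv.Perm (ZMod n)) : ZMod (n + 1) → ZMod (n + 1) :=
  fun y => listFun n π (listInv n π y - 1)

/-- `C_π = Y_π ∘ X_n`, where `X_n` is the cycle `(0 1 2 … n)`, i.e. `x ↦ x + 1`. -/
def Cfun (n : ℕ) (π : Equiv.Perm (ZMod n)) : ZMod (n + 1) → ZMod (n + 1) :=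
  fun x => Yfun n π (x + 1)

/-- The strategic pile of `π ∈ S_n`: the set of values appearing strictly after `n` and
strictly before `0` on the cycle of `C_π` containing `0` and `n` (empty if `0` and `n`
lie in different cycles). -/
def strategicPile (n : ℕ) (π : Equiv.Perm (ZMod n)) : Set (ZMod (n + 1)) :=
  {x | ∃ k m : ℕ, 0 < k ∧ k < m ∧ (Cfun n π)^[m] (n : ZMod (n + 1)) = 0 ∧
      (∀ j, 0 < j → j < m → (Cfun n π)^[j] (n : ZMod (n + 1)) ≠ 0) ∧
      (Cfun n π)^[k] (n : ZMod (n + 1)) = x}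

/-- `π ∈ S_n` has maximal strategic pile. -/
def MaxPile (n : ℕ) (π : Equiv.Perm (ZMod n)) : Prop :=
  (Even n ∧ (strategicPile n π).ncard = n - 1) ∨
  (Odd n ∧ (strategicPile n π).ncard = n - 2)

/-- The position (in `{1,…,n}`) of the value `v` in `π`. -/
def idx (n : ℕ) (π : Equiv.Perm (ZMod n)) (v : ZMod n) : ℕ := repr1 n (π.symm v)

/-- Word coordinate of the occurrence of the pointer `(p,p+1)` as the right pointer of the
entry `p`:  the entry at position `i` is given word coordinate `3*i - 1`, its left pointer
coordinate `3*i - 2` and its right pointer coordinate `3*i`. -/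
def posR (n : ℕ) (π : Equiv.Perm (ZMod n)) (p : ZMod n) : ℕ := 3 * idx n π p

/-- Word coordinate of the occurrence of the pointer `(p,p+1)` as the left pointer of the
entry `p+1`. -/
def posL (n : ℕ) (π : Equiv.Perm (ZMod n)) (p : ZMod n) : ℕ := 3 * idx n π (p + 1) - 2

/-- Two pairs of positions interleave (pattern `a b a b` or `b a b a`). -/
def Interleaved (a1 a2 b1 b2 : ℕ) : Prop :=
  (min a1 a2 < min b1 b2 ∧ min b1 b2 < max a1 a2 ∧ max a1 a2 < max b1 b2) ∨
  (min b1 b2 < min a1 a2 ∧ min a1 a2 < max b1 b2 ∧ max b1 b2 < max a1 a2)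

/-- `(p, q)` is a valid pointer context for `π`: the two pointers are distinct and their
occurrences in the pointer word of `π` appear in the order `p,q,p,q` or `q,p,q,p`. -/
def ValidContext (n : ℕ) (π : Equiv.Perm (ZMod n)) (p q : ZMod n) : Prop :=
  p ≠ q ∧ Interleaved (posR n π p) (posL n π p) (posR n π q) (posL n π q)

/-- The number of (unordered) valid pointer contexts of `π`. -/
noncomputable def numContexts (n : ℕ) (π : Equiv.Perm (ZMod n)) : ℕ :=
  {pq : ZMod n × ZMod n | ValidContext n π pq.1 pq.2}.ncard / 2

/-- `ρ ∈ S_{2n−1}` is the contraction of `π ∈ S_{2n}`, obtained by deleting the entry `2n`. -/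
def IsContraction (n : ℕ) (ρ : Equiv.Perm (ZMod (2 * n - 1)))
    (π : Equiv.Perm (ZMod (2 * n))) : Prop :=
  ∃ m : ℕ, 1 ≤ m ∧ m ≤ 2 * n ∧ π (m : ZMod (2 * n)) = ((2 * n : ℕ) : ZMod (2 * n)) ∧
    (∀ k : ℕ, 1 ≤ k → k < m →
      ρ (k : ZMod (2 * n - 1)) =
        ((repr1 (2 * n) (π (k : ZMod (2 * n))) : ℕ) : ZMod (2 * n - 1))) ∧
    (∀ k : ℕ, m ≤ k → k ≤ 2 * n - 1 →
      ρ (k : ZMod (2 * n - 1)) =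
        ((repr1 (2 * n) (π ((k + 1 : ℕ) : ZMod (2 * n))) : ℕ) : ZMod (2 * n - 1)))

/-- `M_{2n}`: the contractions of permutations in `S_{2n}` with maximal strategic pile. -/
def MsetAll (n : ℕ) : Set (Equiv.Perm (ZMod (2 * n - 1))) :=
  {ρ | ∃ π : Equiv.Perm (ZMod (2 * n)), MaxPile (2 * n) π ∧ IsContraction n ρ π}

/-- `M_{2n,k}`: the contractions of permutations in `S_{2n}` with maximal strategic pile
and exactly `k` valid pointer contexts. -/
def Mset (n k : ℕ) : Set (Equiv.Perm (ZMod (2 * n - 1))) :=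
  {ρ | ρ ∈ MsetAll n ∧ numContexts (2 * n - 1) ρ = k}

/-- Cyclic shift by `a`: `C_a(π)(x) = π(x - a)`. -/
def Cshift (n : ℕ) (a : ZMod n) (π : Equiv.Perm (ZMod n)) : Equiv.Perm (ZMod n) :=
  (Equiv.subRight a).trans π

/-- Translation by `b`: `T_b(π)(x) = π(x) + b`. -/
def Tshift (n : ℕ) (b : ZMod n) (π : Equiv.Perm (ZMod n)) : Equiv.Perm (ZMod n) :=
  π.trans (Equiv.addRight b)

/-- `φ(a,b,π) = C_a(T_b(π))`, i.e. `x ↦ π(x-a) + b`. -/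
def phiAct (n : ℕ) (a b : ZMod n) (π : Equiv.Perm (ZMod n)) : Equiv.Perm (ZMod n) :=
  Cshift n a (Tshift n b π)

/-- The difference sequence of `π`. -/
def Dseq (n : ℕ) (π : Equiv.Perm (ZMod n)) : ZMod n → ZMod n :=
  fun k => π (k + 1) - π k

/-- The difference sequence of `π` is periodic with (least) period `p`, `0 < p < n`. -/
def PeriodicWith (n : ℕ) (π : Equiv.Perm (ZMod n)) (p : ℕ) : Prop :=
  0 < p ∧ p < n ∧ (∀ k : ZMod n, Dseq n π (k + (p : ZMod n)) = Dseq n π k) ∧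
    ∀ q : ℕ, 0 < q → q < p → ¬ ∀ k : ZMod n, Dseq n π (k + (q : ZMod n)) = Dseq n π k

lemma repr1_pos {N : ℕ} (hN : 0 < N) (x : ZMod N) : 1 ≤ repr1 N x ∧ repr1 N x ≤ N := by
  haveI : NeZero N := ⟨hN.ne'⟩
  unfold repr1
  split_ifs with h
  · omega
  · have hv : x.val < N := ZMod.val_lt x
    have hv0 : x.val ≠ 0 := fun h0 => h ((ZMod.val_eq_zero x).mp h0)
    omega

lemma cast_repr1 {N : ℕ} (hN : 0 < N) (x : ZMod N) : ((repr1 N x : ℕ) : ZMod N) = x := by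
  haveI : NeZero N := ⟨hN.ne'⟩
  unfold repr1
  split_ifs with h
  · simp [h]
  · rw [ZMod.natCast_val, ZMod.cast_id]

lemma repr1_cast {N m : ℕ} (hN : 0 < N) (h1 : 1 ≤ m) (h2 : m ≤ N) :
    repr1 N ((m : ZMod N)) = m := by
  haveI : NeZero N := ⟨hN.ne'⟩
  unfold repr1
  split_ifs with h
  · have hdvd := (ZMod.natCast_eq_zero_iff m N).mp h
    have := Nat.le_of_dvd (by omega) hdvd
    omega
  · have hm : m ≠ N := by
      intro hEq; subst hEq; exact h (ZMod.natCast_self _)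
    rw [ZMod.val_natCast, Nat.mod_eq_of_lt (by omega)]

lemma repr1_add {N e : ℕ} (hN : 0 < N) (he1 : 1 ≤ e) (he2 : e ≤ N - 1) (s : ZMod N) :
    repr1 N (s + (e : ZMod N)) =
      if repr1 N s + e ≤ N then repr1 N s + e else repr1 N s + e - N := by
  obtain ⟨h1, h2⟩ := repr1_pos hN s
  have hc : s + (e : ZMod N) = ((repr1 N s + e : ℕ) : ZMod N) := by
    push_cast
    rw [cast_repr1 hN]
  split_ifs with h
  · rw [hc]; exact repr1_cast hN (by omega) h
  · have hc2 : ((repr1 N s + e : ℕ) : ZMod N) = ((repr1 N s + e - N : ℕ) : ZMod N) := by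
      have hEq : repr1 N s + e = (repr1 N s + e - N) + N := by omega
      rw [hEq]
      push_cast
      simp
    rw [hc, hc2]
    exact repr1_cast hN (by omega) (by omega)

lemma key_inter (N e a b u : ℕ) (he1 : 1 ≤ e) (he2 : e + 1 ≤ N)
    (ha : 1 ≤ a) (ha' : a ≤ N) (hb : 1 ≤ b) (hb' : b ≤ N) (hab : a ≠ b)
    (h1 : a < b → b - a = u) (h2 : b < a → b + N - a = u) :
    Interleaved (3*a) (3 * (if a+e ≤ N then a+e else a+e-N) - 2)
      (3*b) (3 * (if b+e ≤ N then b+e else b+e-N) - 2) ↔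
    ((u ≤ e-1) ↔ ¬(N-e+1 ≤ u)) := by
  unfold Interleaved
  split_ifs <;> omega

theorem main_aux (N : ℕ) (hN : 3 ≤ N) (π : Equiv.Perm (ZMod N)) (d : ZMod N)
    (hconst : ∀ k : ZMod N, Dseq N π k = d) (e : ℕ) (he1 : 1 ≤ e) (he2 : e ≤ N - 1)
    (hinv : (e : ZMod N) * d = 1) :
    numContexts N π = N * min (e - 1) (N - e) := by
  classical
  haveI : NeZero N := ⟨by omega⟩
  have hN0 : 0 < N := by omega
  -- affine structure
  have hstep : ∀ k : ZMod N, π (k + 1) = π k + d := by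
    intro k
    have h := hconst k
    unfold Dseq at h
    have h2 := eq_add_of_sub_eq h
    rw [h2]; ring
  have hnat : ∀ m : ℕ, π ((m : ℕ) : ZMod N) = π 0 + (m : ZMod N) * d := by
    intro m
    induction m with
    | zero => simp
    | succ m ih =>
      push_cast
      rw [hstep ((m : ℕ) : ZMod N), ih]
      ring
  have haff : ∀ x : ZMod N, π x = π 0 + x * d := by
    intro x
    have h := hnat x.val
    rwa [ZMod.natCast_val, ZMod.cast_id] at h
  have hed : (e : ZMod N) * d = 1 := hinv
  have hde : d * (e : ZMod N) = 1 := by rw [mul_comm]; exact hinv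
  have hsymm : ∀ y : ZMod N, π.symm y = (y - π 0) * (e : ZMod N) := by
    intro y
    rw [Equiv.symm_apply_eq, haff, mul_assoc, hed, mul_one]
    ring
  -- pointwise characterization
  have hmain : ∀ p q : ZMod N, ValidContext N π p q ↔
      ((q - p) * (e : ZMod N) ≠ 0 ∧
        ((((q - p) * (e : ZMod N)).val ≤ e - 1) ↔
          ¬(N - e + 1 ≤ ((q - p) * (e : ZMod N)).val))) := by
    intro p q
    have hs1 : π.symm p = (p - π 0) * (e : ZMod N) := hsymm p
    have ht1 : π.symm q = (q - π 0) * (e : ZMod N) := hsymm q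
    have hs2 : π.symm (p + 1) = (p - π 0) * (e : ZMod N) + (e : ZMod N) := by
      rw [hsymm (p + 1)]; ring
    have ht2 : π.symm (q + 1) = (q - π 0) * (e : ZMod N) + (e : ZMod N) := by
      rw [hsymm (q + 1)]; ring
    have hts : (q - p) * (e : ZMod N)
        = (q - π 0) * (e : ZMod N) - (p - π 0) * (e : ZMod N) := by ring
    obtain ⟨ha1, ha2⟩ := repr1_pos hN0 ((p - π 0) * (e : ZMod N))
    obtain ⟨hb1, hb2⟩ := repr1_pos hN0 ((q - π 0) * (e : ZMod N))
    have hcs := cast_repr1 hN0 ((p - π 0) * (e : ZMod N))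
    have hct := cast_repr1 hN0 ((q - π 0) * (e : ZMod N))
    have hstiff : (p - π 0) * (e : ZMod N) = (q - π 0) * (e : ZMod N) ↔ p = q := by
      constructor
      · intro h
        have h3 : (p - π 0) * (e : ZMod N) * d = (q - π 0) * (e : ZMod N) * d := by rw [h]
        rw [mul_assoc, mul_assoc, hed, mul_one, mul_one] at h3
        exact sub_left_inj.mp h3
      · intro h; rw [h]
    have habiff : repr1 N ((p - π 0) * (e : ZMod N)) = repr1 N ((q - π 0) * (e : ZMod N))
        → p = q := by
      intro h
      exact hstiff.mp (by rw [← hcs, ← hct, h])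
    have hne_iff : p ≠ q ↔ (q - p) * (e : ZMod N) ≠ 0 := by
      rw [hts, sub_ne_zero]
      constructor
      · intro h heq; exact h (hstiff.mp heq.symm)
      · intro h heq; exact h (hstiff.mpr heq).symm
    have h1 : repr1 N ((p - π 0) * (e : ZMod N)) < repr1 N ((q - π 0) * (e : ZMod N)) →
        repr1 N ((q - π 0) * (e : ZMod N)) - repr1 N ((p - π 0) * (e : ZMod N))
          = ((q - p) * (e : ZMod N)).val := by
      intro hlt
      have hc : ((repr1 N ((q - π 0) * (e : ZMod N)) - repr1 N ((p - π 0) * (e : ZMod N)) : ℕ)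
          : ZMod N) = (q - p) * (e : ZMod N) := by
        rw [hts, Nat.cast_sub hlt.le, hcs, hct]
      rw [← hc, ZMod.val_natCast, Nat.mod_eq_of_lt (by omega)]
    have h2 : repr1 N ((q - π 0) * (e : ZMod N)) < repr1 N ((p - π 0) * (e : ZMod N)) →
        repr1 N ((q - π 0) * (e : ZMod N)) + N - repr1 N ((p - π 0) * (e : ZMod N))
          = ((q - p) * (e : ZMod N)).val := by
      intro hlt
      have hc : ((repr1 N ((q - π 0) * (e : ZMod N)) + N - repr1 N ((p - π 0) * (e : ZMod N)) : ℕ)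
          : ZMod N) = (q - p) * (e : ZMod N) := by
        rw [hts, Nat.cast_sub (by omega), Nat.cast_add, ZMod.natCast_self, hcs, hct]
        ring
      rw [← hc, ZMod.val_natCast, Nat.mod_eq_of_lt (by omega)]
    unfold ValidContext posR posL idx
    rw [hs1, ht1, hs2, ht2, repr1_add hN0 he1 he2 ((p - π 0) * (e : ZMod N)),
      repr1_add hN0 he1 he2 ((q - π 0) * (e : ZMod N))]
    constructor
    · rintro ⟨hne, hI⟩
      refine ⟨hne_iff.mp hne, ?_⟩
      have hab : repr1 N ((p - π 0) * (e : ZMod N)) ≠ repr1 N ((q - π 0) * (e : ZMod N)) :=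
        fun h => hne (habiff h)
      exact (key_inter N e _ _ _ he1 (by omega) ha1 ha2 hb1 hb2 hab h1 h2).mp hI
    · rintro ⟨hne', hX⟩
      have hne : p ≠ q := hne_iff.mpr hne'
      have hab : repr1 N ((p - π 0) * (e : ZMod N)) ≠ repr1 N ((q - π 0) * (e : ZMod N)) :=
        fun h => hne (habiff h)
      exact ⟨hne, (key_inter N e _ _ _ he1 (by omega) ha1 ha2 hb1 hb2 hab h1 h2).mpr hX⟩
  -- counting
  set V : Finset (ZMod N) := Finset.univ.filter (fun v : ZMod N =>
      v ≠ 0 ∧ ((v.val ≤ e - 1) ↔ ¬(N - e + 1 ≤ v.val))) with hVdef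
  set F : Finset (ZMod N × ZMod N) := Finset.univ.filter (fun pq : ZMod N × ZMod N =>
      (pq.2 - pq.1) * (e : ZMod N) ≠ 0 ∧
        ((((pq.2 - pq.1) * (e : ZMod N)).val ≤ e - 1) ↔
          ¬(N - e + 1 ≤ ((pq.2 - pq.1) * (e : ZMod N)).val))) with hFdef
  have hset : {pq : ZMod N × ZMod N | ValidContext N π pq.1 pq.2} = ↑F := by
    ext pq
    rw [hFdef]
    simp only [Set.mem_setOf_eq, Finset.coe_filter, Finset.mem_univ, true_and,
      Set.mem_setOf_eq]
    exact hmain pq.1 pq.2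
  have hFcard : F.card = V.card * N := by
    have hprod : (V ×ˢ (Finset.univ : Finset (ZMod N))).card = V.card * N := by
      rw [Finset.card_product, Finset.card_univ, ZMod.card]
    rw [← hprod]
    apply Finset.card_nbij' (i := fun pq : ZMod N × ZMod N => ((pq.2 - pq.1) * (e : ZMod N), pq.1))
      (j := fun vp : ZMod N × ZMod N => (vp.2, vp.2 + vp.1 * d))
    · intro pq hpq
      rw [hFdef] at hpq
      simp only [Finset.mem_coe, Finset.mem_filter, Finset.mem_univ, true_and] at hpq
      rw [hVdef]
      simp only [Finset.mem_coe, Finset.mem_product, Finset.mem_filter, Finset.mem_univ, true_and, and_true]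
      exact hpq
    · intro vp hvp
      rw [hVdef] at hvp
      simp only [Finset.mem_coe, Finset.mem_product, Finset.mem_filter, Finset.mem_univ, true_and,
        and_true] at hvp
      rw [hFdef]
      simp only [Finset.mem_coe, Finset.mem_filter, Finset.mem_univ, true_and]
      have hval : (vp.2 + vp.1 * d - vp.2) * (e : ZMod N) = vp.1 := by
        have h9 : vp.2 + vp.1 * d - vp.2 = vp.1 * d := by ring
        rw [h9, mul_assoc, hde, mul_one]
      rw [hval]
      exact hvp
    · intro pq hpq
      refine Prod.ext rfl ?_
      show pq.1 + (pq.2 - pq.1) * (e : ZMod N) * d = pq.2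
      rw [mul_assoc, hed, mul_one]
      ring
    · intro vp hvp
      refine Prod.ext ?_ rfl
      show (vp.2 + vp.1 * d - vp.2) * (e : ZMod N) = vp.1
      have h9 : vp.2 + vp.1 * d - vp.2 = vp.1 * d := by ring
      rw [h9, mul_assoc, hde, mul_one]
  have hVcard : V.card = 2 * min (e - 1) (N - e) := by
    have hVW : V.card = ((Finset.range N).filter (fun u : ℕ =>
        u ≠ 0 ∧ ((u ≤ e - 1) ↔ ¬(N - e + 1 ≤ u)))).card := by
      apply Finset.card_nbij' (i := fun v : ZMod N => v.val) (j := fun u : ℕ => (u : ZMod N))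
      · intro v hv
        rw [hVdef] at hv
        simp only [Finset.mem_coe, Finset.mem_filter, Finset.mem_univ, true_and] at hv
        simp only [Finset.mem_coe, Finset.mem_filter, Finset.mem_range]
        exact ⟨ZMod.val_lt v, fun h0 => hv.1 ((ZMod.val_eq_zero v).mp h0), hv.2⟩
      · intro u hu
        simp only [Finset.mem_coe, Finset.mem_filter, Finset.mem_range] at hu
        rw [hVdef]
        simp only [Finset.mem_coe, Finset.mem_filter, Finset.mem_univ, true_and]
        rw [ZMod.val_natCast, Nat.mod_eq_of_lt hu.1]
        refine ⟨?_, hu.2.2⟩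
        intro h0
        have hd9 := (ZMod.natCast_eq_zero_iff u N).mp h0
        exact hu.2.1 (Nat.eq_zero_of_dvd_of_lt hd9 hu.1)
      · intro v hv
        dsimp only
        rw [ZMod.natCast_val, ZMod.cast_id]
      · intro u hu
        simp only [Finset.mem_coe, Finset.mem_filter, Finset.mem_range] at hu
        dsimp only
        rw [ZMod.val_natCast, Nat.mod_eq_of_lt hu.1]
    rw [hVW]
    have hWeq : (Finset.range N).filter (fun u : ℕ =>
        u ≠ 0 ∧ ((u ≤ e - 1) ↔ ¬(N - e + 1 ≤ u)))
        = Finset.Icc 1 (min (e - 1) (N - e)) ∪ Finset.Icc (max e (N - e + 1)) (N - 1) := by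
      ext u
      simp only [Finset.mem_filter, Finset.mem_range, Finset.mem_union, Finset.mem_Icc]
      omega
    rw [hWeq, Finset.card_union_of_disjoint, Nat.card_Icc, Nat.card_Icc]
    · omega
    · rw [Finset.disjoint_left]
      intro u h1 h2
      simp only [Finset.mem_Icc] at h1 h2
      omega
  unfold numContexts
  rw [hset, Set.ncard_coe_finset, hFcard, hVcard, mul_assoc,
    Nat.mul_div_cancel_left _ (by norm_num : (0:ℕ) < 2), mul_comm]

/-- Let `π ∈ S_{2n-1}` have constant difference sequence with value `d`,
`gcd(2n-1, d) = 1`, and let `e ∈ {1,…,2n-2}` be the multiplicative inverse of `d`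
modulo `2n-1`.  Then the number of valid pointer contexts of `π` is
`(2n-1)·min(e-1, 2n-1-e)`. -/
theorem stmt13 (n : ℕ) (hn : 0 < n) (π : Equiv.Perm (ZMod (2 * n - 1)))
    (d : ZMod (2 * n - 1)) (hconst : ∀ k : ZMod (2 * n - 1), Dseq (2 * n - 1) π k = d)
    (hgcd : Nat.gcd (2 * n - 1) d.val = 1)
    (e : ℕ) (he1 : 1 ≤ e) (he2 : e ≤ 2 * n - 2)
    (hinv : (e : ZMod (2 * n - 1)) * d = 1) :
    numContexts (2 * n - 1) π = (2 * n - 1) * min (e - 1) (2 * n - 1 - e) := by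
  have hn2 : 2 ≤ n := by omega
  exact main_aux (2 * n - 1) (by omega) π d hconst e he1 (by omega) hinv
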